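/- For every matrix F in M_3(ℝ) with det(F) > 0, the distance from F to SO(3) in Frobenius norm satisfies dist(F, SO(3)) ≤ |F^T F − I_3|_F. -/

import Mathlib

open Matrix
open scoped MatrixOrder

/-- Frobenius norm of a 3×3 real matrix. -/
noncomputable def frob (F : Matrix (Fin 3) (Fin 3) ℝ) : ℝ :=
  Real.sqrt (∑ i, ∑ j, (F i j) ^ 2)

/-- The special orthogonal group SO(3) as a set of matrices. -/
def SO3 : Set (Matrix (Fin 3) (Fin 3) ℝ) :=
  {R | Rᵀ * R = 1 ∧ R.det = 1}

/-- Frobenius distance from a matrix to SO(3). -/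
noncomputable def distSO3 (F : Matrix (Fin 3) (Fin 3) ℝ) : ℝ :=
  sInf ((fun R => frob (F - R)) '' SO3)

lemma frob_eq_sqrt_trace (M : Matrix (Fin 3) (Fin 3) ℝ) :
    frob M = Real.sqrt ((Mᵀ * M).trace) := by
  unfold frob
  congr 1
  simp only [Matrix.trace, Matrix.diag, Matrix.mul_apply, Matrix.transpose_apply, pow_two]
  rw [Finset.sum_comm]


lemma trace_nonneg_of_psd {M : Matrix (Fin 3) (Fin 3) ℝ} (hM : M.PosSemidef) :
    0 ≤ M.trace := by
  rw [Matrix.trace]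
  refine Finset.sum_nonneg fun i _ => ?_
  exact hM.diag_nonneg

lemma trace_mul_psd_nonneg {A B : Matrix (Fin 3) (Fin 3) ℝ}
    (hA : A.PosSemidef) (hB : B.PosSemidef) : 0 ≤ (A * B).trace := by
  have hC : (CFC.sqrt B).PosSemidef := (CFC.sqrt_nonneg B).posSemidef
  have h1 : A * B = A * CFC.sqrt B * CFC.sqrt B := by rw [mul_assoc, CFC.sqrt_mul_sqrt_self B hB.nonneg]
  rw [h1, Matrix.trace_mul_comm]
  have h2 := hA.conjTranspose_mul_mul_same (CFC.sqrt B)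
  rw [hC.1] at h2
  rw [← mul_assoc]
  exact trace_nonneg_of_psd h2

lemma frob_mul_left {R M : Matrix (Fin 3) (Fin 3) ℝ} (hR : Rᵀ * R = 1) :
    frob (R * M) = frob M := by
  rw [frob_eq_sqrt_trace, frob_eq_sqrt_trace]
  congr 2
  rw [Matrix.transpose_mul, show Mᵀ * Rᵀ * (R * M) = Mᵀ * (Rᵀ * R) * M by
    simp [mul_assoc], hR, mul_one]

private theorem main_aux (F : Matrix (Fin 3) (Fin 3) ℝ) (hF : 0 < F.det) :
    sInf ((fun R => frob (F - R)) '' {R : Matrix (Fin 3) (Fin 3) ℝ | Rᵀ * R = 1 ∧ R.det = 1})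
      ≤ frob (Fᵀ * F - 1) := by
  have hA : (Fᵀ * F).PosSemidef := by
    have := posSemidef_conjTranspose_mul_self F
    rwa [conjTranspose_eq_transpose_of_trivial] at this
  set U := CFC.sqrt (Fᵀ * F) with hU
  have hUps : U.PosSemidef := (CFC.sqrt_nonneg _).posSemidef
  have hUU : U * U = Fᵀ * F := CFC.sqrt_mul_sqrt_self _ hA.nonneg
  have hUh : Uᵀ = U := by
    rw [← conjTranspose_eq_transpose_of_trivial]
    exact hUps.1.eq
  have hdetU2 : U.det * U.det = F.det * F.det := by
    rw [← det_mul, hUU, det_mul, det_transpose]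
  have hdetU_ne : U.det ≠ 0 := by
    intro h; rw [h, zero_mul] at hdetU2; nlinarith
  have hdetU_nonneg : 0 ≤ U.det := by
    rw [hUps.1.det_eq_prod_eigenvalues]
    exact Finset.prod_nonneg fun i _ => hUps.eigenvalues_nonneg i
  have hdetU_pos : 0 < U.det := hdetU_nonneg.lt_of_ne (Ne.symm hdetU_ne)
  set R := F * U⁻¹ with hR
  have hUinv : U * U⁻¹ = 1 := mul_nonsing_inv U hdetU_ne.isUnit
  have hinvU : U⁻¹ * U = 1 := nonsing_inv_mul U hdetU_ne.isUnit
  have hRtR : Rᵀ * R = 1 := by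
    rw [hR, transpose_mul, transpose_nonsing_inv, hUh]
    calc U⁻¹ * Fᵀ * (F * U⁻¹) = U⁻¹ * (Fᵀ * F) * U⁻¹ := by simp [mul_assoc]
      _ = U⁻¹ * (U * U) * U⁻¹ := by rw [hUU]
      _ = (U⁻¹ * U) * (U * U⁻¹) := by simp [mul_assoc]
      _ = 1 := by rw [hinvU, hUinv, one_mul]
  have hdetR : R.det = 1 := by
    have h2 : R.det * R.det = 1 := by
      have := congrArg Matrix.det hRtR
      rwa [det_mul, det_transpose, det_one] at this
    have hpos : 0 < R.det := by
      rw [hR, det_mul, det_nonsing_inv]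
      rw [Ring.inverse_eq_inv]
      exact mul_pos hF (inv_pos.mpr hdetU_pos)
    nlinarith
  have hFR : F - R = R * (U - 1) := by
    rw [mul_sub, mul_one, hR, mul_assoc, hinvU, mul_one]
  have hfrob1 : frob (F - R) = frob (U - 1) := by rw [hFR, frob_mul_left hRtR]
  have key : frob (U - 1) ≤ frob (Fᵀ * F - 1) := by
    rw [frob_eq_sqrt_trace, frob_eq_sqrt_trace]
    apply Real.sqrt_le_sqrt
    have hU1h : (U - 1)ᵀ = U - 1 := by rw [transpose_sub, hUh, transpose_one]
    have hA1h : (Fᵀ * F - 1)ᵀ = Fᵀ * F - 1 := by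
      rw [transpose_sub, transpose_mul, transpose_transpose, transpose_one]
    rw [hU1h, hA1h, ← hUU]
    have expand : (U * U - 1) * (U * U - 1)
        = (U - 1) * (U - 1) + ((U - 1) * (U - 1)) * (U * U + U + U) := by
      noncomm_ring
    rw [expand, Matrix.trace_add]
    have hP1 : ((U - 1) * (U - 1)).PosSemidef := by
      have := posSemidef_conjTranspose_mul_self (U - 1)
      rwa [conjTranspose_eq_transpose_of_trivial, hU1h] at this
    have hP2 : (U * U + U + U).PosSemidef := by
      have hUUps : (U * U).PosSemidef := by
        have := posSemidef_conjTranspose_mul_self U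
        rwa [conjTranspose_eq_transpose_of_trivial, hUh] at this
      exact (hUUps.add hUps).add hUps
    have := trace_mul_psd_nonneg hP1 hP2
    linarith
  have hmem : frob (F - R) ∈ (fun S => frob (F - S)) ''
      {S : Matrix (Fin 3) (Fin 3) ℝ | Sᵀ * S = 1 ∧ S.det = 1} :=
    ⟨R, ⟨hRtR, hdetR⟩, rfl⟩
  have hbdd : BddBelow ((fun S => frob (F - S)) ''
      {S : Matrix (Fin 3) (Fin 3) ℝ | Sᵀ * S = 1 ∧ S.det = 1}) := by
    refine ⟨0, ?_⟩
    rintro x ⟨S, -, rfl⟩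
    exact Real.sqrt_nonneg _
  calc sInf _ ≤ frob (F - R) := csInf_le hbdd hmem
    _ = frob (U - 1) := hfrob1
    _ ≤ frob (Fᵀ * F - 1) := key

/-- For every `F` with positive determinant, `dist(F, SO(3)) ≤ |FᵀF − I|_F`. -/
theorem dist_SO3_le_frob_strain (F : Matrix (Fin 3) (Fin 3) ℝ) (hF : 0 < F.det) :
    distSO3 F ≤ frob (Fᵀ * F - 1) := by
  unfold distSO3 SO3
  exact main_aux F hF
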